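/- Let G be a finite nonabelian characteristically simple group (G ≅ T^k for a nonabelian simple group T), embedded in Sym(G) as a transitive subgroup with G subnormal in X ≤ Sym(G). Then either G is normal in X, or there exists a subgroup N with G ⊲ N ⊲ X; i.e., the subnormal defect of G in X is at most 2. -/

import Mathlib

open scoped commutatorElement

namespace Stmt13Aux

variable {P : Type*} [Group P]

/-- `A` is a normal subgroup of `B` (elementwise formulation). -/
def normin (A B : Subgroup P) : Prop :=
  A ≤ B ∧ ∀ b ∈ B, ∀ a ∈ A, b * a * b⁻¹ ∈ A

/-- `A` is subnormal in `B` with defect at most `r`. -/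
def subn : ℕ → Subgroup P → Subgroup P → Prop
  | 0, A, B => A = B
  | (r+1), A, B => ∃ Y, subn r A Y ∧ normin Y B

/-- Simplicity of a subgroup, in lattice terms. -/
def issimp (K : Subgroup P) : Prop :=
  K ≠ ⊥ ∧ ∀ H ≤ K, (∀ k ∈ K, ∀ h ∈ H, k * h * k⁻¹ ∈ H) → H = ⊥ ∨ H = K

def nonab (K : Subgroup P) : Prop := ∃ a ∈ K, ∃ b ∈ K, a * b ≠ b * a

lemma subn_le : ∀ {r : ℕ} {A B : Subgroup P}, subn r A B → A ≤ B
  | 0, _, _, h => le_of_eq h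
  | (_+1), _, _, ⟨_, h1, h2⟩ => (subn_le h1).trans h2.1

lemma subn_cons {A A' B : Subgroup P} :
    ∀ {r : ℕ}, normin A A' → subn r A' B → subn (r+1) A B
  | 0, h, e => ⟨A, rfl, e ▸ h⟩
  | (_+1), h, ⟨Y, h1, h2⟩ => ⟨Y, subn_cons h h1, h2⟩

lemma subn_of_chain (c : ℕ → Subgroup P) :
    ∀ r : ℕ, (∀ i < r, normin (c i) (c (i+1))) → subn r (c 0) (c r)
  | 0, _ => rfl
  | (r+1), h => ⟨c r, subn_of_chain c r (fun i hi => h i (Nat.lt_succ_of_lt hi)),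
      h r (Nat.lt_succ_self r)⟩

lemma subn_of_le_normin : ∀ {s : ℕ} {L B Y : Subgroup P},
    subn s L B → normin Y B → L ≤ Y → subn s L Y
  | 0, _, _, _, h, hY, hL => le_antisymm hL (h ▸ hY.1)
  | (_+1), _, _, Y, ⟨Z, h1, h2⟩, hY, hL => by
      refine ⟨Z ⊓ Y, subn_of_le_normin h1 ?_ (le_inf (subn_le h1) hL), ?_⟩
      · exact ⟨inf_le_left, fun z hz a ha =>
          ⟨Z.mul_mem (Z.mul_mem hz ha.1) (Z.inv_mem hz),
           hY.2 z (h2.1 hz) a ha.2⟩⟩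
      · exact ⟨inf_le_right, fun y hy a ha =>
          ⟨h2.2 y (hY.1 hy) a ha.1, Y.mul_mem (Y.mul_mem hy ha.2) (Y.inv_mem hy)⟩⟩

/-- Conjugate of a subgroup. -/
def cmap (x : P) (A : Subgroup P) : Subgroup P :=
  Subgroup.map (MulAut.conj x).toMonoidHom A

lemma mem_cmap {x y : P} {A : Subgroup P} :
    y ∈ cmap x A ↔ ∃ a ∈ A, x * a * x⁻¹ = y := by
  simp [cmap, MulAut.conj]

lemma cmap_cmap (x y : P) (A : Subgroup P) : cmap x (cmap y A) = cmap (x * y) A := by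
  ext z
  simp only [mem_cmap]
  constructor
  · rintro ⟨b, ⟨a, ha, rfl⟩, rfl⟩
    exact ⟨a, ha, by group⟩
  · rintro ⟨a, ha, rfl⟩
    exact ⟨y * a * y⁻¹, ⟨a, ha, rfl⟩, by group⟩

lemma cmap_one (A : Subgroup P) : cmap 1 A = A := by
  ext z; simp [mem_cmap, eq_comm]

lemma cmap_inv_cmap (x : P) (A : Subgroup P) : cmap x⁻¹ (cmap x A) = A := by
  rw [cmap_cmap, inv_mul_cancel, cmap_one]

lemma cmap_cmap_inv (x : P) (A : Subgroup P) : cmap x (cmap x⁻¹ A) = A := by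
  rw [cmap_cmap, mul_inv_cancel, cmap_one]

lemma cmap_mono {A B : Subgroup P} (x : P) (h : A ≤ B) : cmap x A ≤ cmap x B :=
  Subgroup.map_mono h

lemma cmap_bot (x : P) : cmap x (⊥ : Subgroup P) = ⊥ := by
  ext z; simp [mem_cmap, eq_comm]

lemma cmap_normin {A B : Subgroup P} (x : P) (h : normin A B) :
    normin (cmap x A) (cmap x B) := by
  refine ⟨cmap_mono x h.1, ?_⟩
  rintro b hb a ha
  rw [mem_cmap] at hb ha ⊢
  obtain ⟨b0, hb0, rfl⟩ := hb
  obtain ⟨a0, ha0, rfl⟩ := ha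
  exact ⟨b0 * a0 * b0⁻¹, h.2 b0 hb0 a0 ha0, by group⟩

lemma cmap_subn : ∀ {r : ℕ} {A B : Subgroup P} (x : P),
    subn r A B → subn r (cmap x A) (cmap x B)
  | 0, _, _, x, h => congrArg (cmap x) h
  | (_+1), _, _, x, ⟨Y, h1, h2⟩ => ⟨cmap x Y, cmap_subn x h1, cmap_normin x h2⟩

lemma cmap_issimp {K : Subgroup P} (x : P) (h : issimp K) : issimp (cmap x K) := by
  constructor
  · intro hbot
    apply h.1
    rw [← cmap_inv_cmap x K, hbot, cmap_bot]
  · intro H hHK hstab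
    have hH0 : cmap x⁻¹ H ≤ K := by
      have := cmap_mono x⁻¹ hHK
      rwa [cmap_inv_cmap] at this
    have hstab0 : ∀ k ∈ K, ∀ h' ∈ cmap x⁻¹ H, k * h' * k⁻¹ ∈ cmap x⁻¹ H := by
      intro k hk h' hh'
      rw [mem_cmap] at hh' ⊢
      obtain ⟨h0, hh0, rfl⟩ := hh'
      refine ⟨(x * k * x⁻¹) * h0 * (x * k * x⁻¹)⁻¹,
        hstab _ (mem_cmap.mpr ⟨k, hk, rfl⟩) h0 hh0, by group⟩
    rcases h.2 (cmap x⁻¹ H) hH0 hstab0 with h' | h'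
    · left
      rw [← cmap_cmap_inv x H, h', cmap_bot]
    · right
      rw [← cmap_cmap_inv x H, h']

lemma cmap_nonab {K : Subgroup P} (x : P) (h : nonab K) : nonab (cmap x K) := by
  obtain ⟨a, ha, b, hb, hab⟩ := h
  refine ⟨_, mem_cmap.mpr ⟨a, ha, rfl⟩, _, mem_cmap.mpr ⟨b, hb, rfl⟩, fun hc => hab ?_⟩
  have : x * (a * b) * x⁻¹ = x * (b * a) * x⁻¹ := by
    calc x * (a * b) * x⁻¹ = (x * a * x⁻¹) * (x * b * x⁻¹) := by group
    _ = (x * b * x⁻¹) * (x * a * x⁻¹) := hc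
    _ = x * (b * a) * x⁻¹ := by group
  exact mul_left_cancel (mul_right_cancel this)

lemma cmap_self {K : Subgroup P} {k : P} (hk : k ∈ K) : cmap k K = K := by
  apply le_antisymm
  · rintro y hy
    rw [mem_cmap] at hy
    obtain ⟨a, ha, rfl⟩ := hy
    exact K.mul_mem (K.mul_mem hk ha) (K.inv_mem hk)
  · intro y hy
    exact mem_cmap.mpr ⟨k⁻¹ * y * k,
      K.mul_mem (K.mul_mem (K.inv_mem hk) hy) hk, by group⟩

lemma perfect_of_simp {K : Subgroup P} (hs : issimp K) (hn : nonab K) :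
    ⁅K, K⁆ = K := by
  have hstab : ∀ k ∈ K, ∀ h ∈ ⁅K, K⁆, k * h * k⁻¹ ∈ ⁅K, K⁆ := by
    intro k hk h hh
    have : k * h * k⁻¹ ∈ Subgroup.map (MulAut.conj k).toMonoidHom ⁅K, K⁆ :=
      ⟨h, hh, by simp [MulAut.conj]⟩
    rwa [Subgroup.map_commutator, show Subgroup.map (MulAut.conj k).toMonoidHom K = K
      from cmap_self hk] at this
  rcases hs.2 ⁅K, K⁆ (Subgroup.commutator_le.mpr
      (fun a ha b hb => K.mul_mem (K.mul_mem (K.mul_mem ha hb) (K.inv_mem ha)) (K.inv_mem hb)))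
      hstab with h | h
  · exfalso
    obtain ⟨a, ha, b, hb, hab⟩ := hn
    have : ⁅a, b⁆ ∈ ⁅K, K⁆ := Subgroup.commutator_mem_commutator ha hb
    rw [h, Subgroup.mem_bot, commutatorElement_eq_one_iff_mul_comm] at this
    exact hab this
  · exact h

/-- Key lemma (Wielandt-style): a simple nonabelian subnormal subgroup
intersecting a normal subgroup trivially centralizes it. -/
lemma lemA : ∀ (r : ℕ) (K N B : Subgroup P), issimp K → nonab K →
    subn r K B → normin N B → K ⊓ N = ⊥ → ⁅K, N⁆ = ⊥ := by
  intro r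
  induction r with
  | zero =>
    intro K N B _ _ hKB hN hint
    have hNK : N ≤ K := hKB ▸ hN.1
    have : N = ⊥ := le_bot_iff.mp (hint ▸ le_inf hNK le_rfl)
    rw [this]
    exact Subgroup.commutator_bot_right K
  | succ r ih =>
    intro K N B hs hn hKB hN hint
    obtain ⟨Y, hKY, hYB⟩ := hKB
    have hKYle : K ≤ Y := subn_le hKY
    have hNY : normin (N ⊓ Y) Y :=
      ⟨inf_le_right, fun y hy a ha =>
        ⟨hN.2 y (hYB.1 hy) a ha.1, Y.mul_mem (Y.mul_mem hy ha.2) (Y.inv_mem hy)⟩⟩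
    have hint' : K ⊓ (N ⊓ Y) = ⊥ :=
      le_bot_iff.mp ((inf_le_inf_left K inf_le_left).trans hint.le)
    have hIH : ⁅K, N ⊓ Y⁆ = ⊥ := ih K (N ⊓ Y) Y hs hn hKY hNY hint'
    have hcle : ⁅K, N⁆ ≤ N ⊓ Y := by
      rw [Subgroup.commutator_le]
      intro k hk n hn'
      constructor
      · have h1 : k * n * k⁻¹ ∈ N := hN.2 k (hYB.1 (hKYle hk)) n hn'
        simpa [commutatorElement_def, mul_assoc] using N.mul_mem h1 (N.inv_mem hn')
      · have h2 : n * k⁻¹ * n⁻¹ ∈ Y := hYB.2 n (hN.1 hn') k⁻¹ (Y.inv_mem (hKYle hk))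
        have := Y.mul_mem (hKYle hk) h2
        simpa [commutatorElement_def, mul_assoc] using this
    have h1 : ⁅⁅K, N⁆, K⁆ = ⊥ := by
      rw [← le_bot_iff, ← hIH, Subgroup.commutator_comm]
      exact Subgroup.commutator_mono le_rfl hcle
    have h2 : ⁅⁅N, K⁆, K⁆ = ⊥ := by rwa [Subgroup.commutator_comm N K]
    have h3 : ⁅⁅K, K⁆, N⁆ = ⊥ :=
      Subgroup.commutator_commutator_eq_bot_of_rotate h1 h2
    rwa [perfect_of_simp hs hn] at h3

/-- A simple nonabelian subnormal subgroup is inside, or centralizes,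
any normal subgroup. -/
lemma lemB {s : ℕ} {L Y B : Subgroup P} (hs : issimp L) (hn : nonab L)
    (hLB : subn s L B) (hY : normin Y B) : L ≤ Y ∨ ⁅L, Y⁆ = ⊥ := by
  rcases hs.2 (L ⊓ Y) inf_le_left (fun l hl a ha =>
      ⟨L.mul_mem (L.mul_mem hl ha.1) (L.inv_mem hl),
       hY.2 l (subn_le hLB hl) a ha.2⟩) with h | h
  · exact Or.inr (lemA s L Y B hs hn hLB hY h)
  · exact Or.inl (by rw [← h]; exact inf_le_right)

lemma subn_in_simp : ∀ {s : ℕ} {L K : Subgroup P}, issimp K → subn s L K →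
    L = ⊥ ∨ L = K := by
  intro s
  induction s with
  | zero => intro L K _ h; exact Or.inr h
  | succ s ih =>
    intro L K hK h
    obtain ⟨Z, hLZ, hZK⟩ := h
    rcases hK.2 Z hZK.1 hZK.2 with h | h
    · exact Or.inl (le_bot_iff.mp (h ▸ subn_le hLZ))
    · exact ih hK (h ▸ hLZ)

/-- Two simple nonabelian subnormal subgroups are equal or commute. -/
lemma lemC : ∀ (r : ℕ) {s : ℕ} {K L B : Subgroup P}, issimp K → nonab K →
    issimp L → nonab L → subn r K B → subn s L B →
    K = L ∨ ⁅K, L⁆ = ⊥ := by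
  intro r
  induction r with
  | zero =>
    intro s K L B hKsimp _ hLs _ hKB hLB
    rcases subn_in_simp (hKB ▸ hKsimp) hLB with h | h
    · exact absurd h hLs.1
    · exact Or.inl (hKB.trans h.symm)
  | succ r ih =>
    intro s K L B hKs hKn hLs hLn hKB hLB
    obtain ⟨Y, hKY, hYB⟩ := hKB
    rcases lemB hLs hLn hLB hYB with h | h
    · exact ih hKs hKn hLs hLn hKY (subn_of_le_normin hLB hYB h)
    · refine Or.inr (le_bot_iff.mp ?_)
      rw [← h, Subgroup.commutator_comm K L]
      exact Subgroup.commutator_mono le_rfl (subn_le hKY)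

end Stmt13Aux

open Stmt13Aux in
/-- Let `G` be a finite nonabelian characteristically simple
group (`G ≅ T^k`, `T` nonabelian simple), embedded as a transitive subgroup of a
symmetric group, and subnormal in `X`. Then either `G ⊴ X` or there is a
subgroup `N` with `G ⊴ N ⊴ X`; i.e. the subnormal defect of `G` in `X` is at
most 2. -/
theorem stmt13 {Ω : Type*} [Finite Ω] {T : Type*} [Group T] [Finite T]
    [IsSimpleGroup T] (hnab : ∃ a b : T, a * b ≠ b * a)
    (k : ℕ) (hk : 1 ≤ k)
    (G X : Subgroup (Equiv.Perm Ω)) (hGX : G ≤ X)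
    (hGT : Nonempty (↥G ≃* (Fin k → T)))
    (htrans : ∀ a b : Ω, ∃ g ∈ G, g a = b)
    (hsub : ∃ (r : ℕ) (c : ℕ → Subgroup (Equiv.Perm Ω)),
      c 0 = G ∧ c r = X ∧ ∀ i < r, c i ≤ c (i + 1) ∧
        ∀ g ∈ c (i + 1), ∀ n ∈ c i, g * n * g⁻¹ ∈ c i) :
    (∀ x ∈ X, ∀ g ∈ G, x * g * x⁻¹ ∈ G) ∨
    (∃ N : Subgroup (Equiv.Perm Ω), G ≤ N ∧ N ≤ X ∧
      (∀ n ∈ N, ∀ g ∈ G, n * g * n⁻¹ ∈ G) ∧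
      (∀ x ∈ X, ∀ n ∈ N, x * n * x⁻¹ ∈ N)) := by
  classical
  set P := Equiv.Perm Ω
  obtain ⟨e⟩ := hGT
  obtain ⟨r, c, h0, hr, hch⟩ := hsub
  -- `G` is subnormal in `X` with defect `r`
  have subnG : subn r G X := by
    have := subn_of_chain c r (fun i hi => ⟨(hch i hi).1, (hch i hi).2⟩)
    rwa [h0, hr] at this
  -- the simple factors of `G`
  set φ : Fin k → (T →* P) := fun i =>
    G.subtype.comp (e.symm.toMonoidHom.comp (MonoidHom.mulSingle (fun _ : Fin k => T) i))
    with hφ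
  set S : Fin k → Subgroup P := fun i => (φ i).range with hS
  have hφapply : ∀ i t, φ i t = ((e.symm (Pi.mulSingle i t) : ↥G) : P) := fun i t => rfl
  have hφinj : ∀ i, Function.Injective (φ i) := by
    intro i a b h
    rw [hφapply, hφapply] at h
    have h2 := e.symm.injective (Subtype.coe_injective h)
    have h3 := congrFun h2 i
    simpa using h3
  have hSG : ∀ i, S i ≤ G := by
    rintro i x ⟨t, rfl⟩
    rw [hφapply]
    exact (e.symm (Pi.mulSingle i t)).2
  -- conjugation of `Pi.mulSingle` in the product
  have hsingle_conj : ∀ (u : Fin k → T) (i : Fin k) (t : T),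
      u * Pi.mulSingle i t * u⁻¹ = Pi.mulSingle i (u i * t * (u i)⁻¹) := by
    intro u i t
    funext j
    by_cases hj : j = i
    · subst hj; simp
    · simp [Pi.mulSingle_eq_of_ne hj]
  -- key conjugation identity
  have key : ∀ (a : ↥G) (i : Fin k) (t : T),
      (↑a : P) * φ i t * (↑a)⁻¹ = φ i (e a i * t * (e a i)⁻¹) := by
    intro a i t
    rw [hφapply, hφapply, ← hsingle_conj (e a) i t]
    rw [map_mul, map_mul, map_inv, e.symm_apply_apply]
    rfl
  have hSnormin : ∀ i, normin (S i) G := by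
    intro i
    refine ⟨hSG i, ?_⟩
    rintro g hg s ⟨t, rfl⟩
    have := key ⟨g, hg⟩ i t
    rw [show ((⟨g, hg⟩ : ↥G) : P) = g from rfl] at this
    rw [this]
    exact ⟨_, rfl⟩
  have hSsimp : ∀ i, issimp (S i) := by
    intro i
    constructor
    · intro hbot
      obtain ⟨a, b, hab⟩ := hnab
      have ha : φ i a ∈ S i := ⟨a, rfl⟩
      have hb : φ i b ∈ S i := ⟨b, rfl⟩
      rw [hbot, Subgroup.mem_bot] at ha hb
      have ha' : a = 1 := hφinj i (by rw [ha, map_one])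
      have hb' : b = 1 := hφinj i (by rw [hb, map_one])
      rw [ha', hb'] at hab
      exact hab rfl
    · intro H hH hstab
      have hnormal : (H.comap (φ i)).Normal := by
        constructor
        intro n hn t
        have : φ i (t * n * t⁻¹) ∈ H := by
          rw [map_mul, map_mul, map_inv]
          exact hstab (φ i t) ⟨t, rfl⟩ (φ i n) hn
        exact this
      rcases IsSimpleGroup.eq_bot_or_eq_top_of_normal (H.comap (φ i)) hnormal with h' | h'
      · left
        rw [eq_bot_iff]
        intro z hz
        obtain ⟨t, rfl⟩ := hH hz
        have : t ∈ H.comap (φ i) := hz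
        rw [h', Subgroup.mem_bot] at this
        rw [this, map_one]
        exact Subgroup.mem_bot.mpr rfl
      · right
        refine le_antisymm hH ?_
        rintro z ⟨t, rfl⟩
        have : t ∈ H.comap (φ i) := by rw [h']; trivial
        exact this
  have hSnonab : ∀ i, nonab (S i) := by
    intro i
    obtain ⟨a, b, hab⟩ := hnab
    refine ⟨φ i a, ⟨a, rfl⟩, φ i b, ⟨b, rfl⟩, fun hc => hab ?_⟩
    apply hφinj i
    rw [map_mul, map_mul]
    exact hc
  -- `G` is generated by its simple factors
  have hclaim : ∀ n : ℕ, ∀ v : Fin k → T, (∀ j : Fin k, n ≤ (j : ℕ) → v j = 1) →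
      ((e.symm v : ↥G) : P) ∈ ⨆ i, S i := by
    intro n
    induction n with
    | zero =>
      intro v hv
      have : v = 1 := funext fun j => hv j (Nat.zero_le _)
      rw [this, map_one]
      exact one_mem _
    | succ n ih =>
      intro v hv
      by_cases hnk : n < k
      · set i : Fin k := ⟨n, hnk⟩ with hi
        have hvsplit : v = Pi.mulSingle i (v i) * Function.update v i 1 := by
          funext j
          by_cases hj : j = i
          · subst hj; simp
          · simp [Pi.mulSingle_eq_of_ne hj, Function.update_of_ne hj]
        have m1 : ((e.symm (Pi.mulSingle i (v i)) : ↥G) : P) ∈ ⨆ i, S i :=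
          le_iSup S i ⟨v i, rfl⟩
        have m2 : ((e.symm (Function.update v i 1) : ↥G) : P) ∈ ⨆ i, S i := by
          apply ih
          intro j hj
          by_cases hji : j = i
          · subst hji; simp
          · rw [Function.update_of_ne hji]
            apply hv
            have h1 : (j : ℕ) ≠ n := fun h => hji (Fin.ext h)
            omega
        rw [hvsplit, map_mul]
        exact mul_mem m1 m2
      · exact ih v (fun j hj => absurd (lt_of_lt_of_le j.2 (not_lt.mp hnk))
          (not_lt.mpr hj))
  have hGle : G ≤ ⨆ i, S i := by
    intro g hg
    have := hclaim k (e ⟨g, hg⟩) (fun j hj => absurd j.2 (not_lt.mpr hj))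
    rwa [e.symm_apply_apply] at this
  have hGeq : G = ⨆ i, S i := le_antisymm hGle (iSup_le hSG)
  -- subnormality of the factors in X
  have hSsubn : ∀ i, subn (r+1) (S i) X := fun i => subn_cons (hSnormin i) subnG
  -- a conjugation-stability helper
  have fwd : ∀ (μ : P), (∀ (j : Fin k), ∀ h : P, h ∈ S j → μ * h * μ⁻¹ ∈ S j) →
      ∀ h ∈ (⨆ i, S i : Subgroup P), μ * h * μ⁻¹ ∈ (⨆ i, S i : Subgroup P) := by
    intro μ hμ h hh
    refine Subgroup.iSup_induction S (C := fun z => μ * z * μ⁻¹ ∈ ⨆ i, S i) hh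
      (fun j x hx => le_iSup S j (hμ j x hx)) (by simp only [P]; simpa using one_mem _) ?_
    intro x y hx hy
    have hxy : μ * (x * y) * μ⁻¹ = (μ * x * μ⁻¹) * (μ * y * μ⁻¹) := by simp only [P]; group
    rw [hxy]
    exact mul_mem hx hy
  -- normalizer criterion
  have hnormSj : ∀ κ : P, (∀ (j : Fin k), ∀ h : P, h ∈ S j ↔ κ * h * κ⁻¹ ∈ S j) →
      κ ∈ Subgroup.normalizer (G : Set P) := by
    intro κ hκ
    rw [Subgroup.mem_normalizer_iff]
    intro h
    have hκinv : ∀ (j : Fin k), ∀ h : P, h ∈ S j → κ⁻¹ * h * κ⁻¹⁻¹ ∈ S j := by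
      intro j x hx
      rw [inv_inv]
      apply (hκ j (κ⁻¹ * x * κ)).mpr
      have : κ * (κ⁻¹ * x * κ) * κ⁻¹ = x := by simp only [P]; group
      rwa [this]
    constructor
    · intro hh
      rw [hGeq] at hh ⊢
      exact fwd κ (fun j x hx => (hκ j x).mp hx) h hh
    · intro hh
      rw [hGeq] at hh ⊢
      have := fwd κ⁻¹ hκinv (κ * h * κ⁻¹) hh
      have heq : κ⁻¹ * (κ * h * κ⁻¹) * κ⁻¹⁻¹ = h := by simp only [P]; group
      rwa [heq] at this
  -- each conjugate of each factor normalizes G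
  have hKj : ∀ x ∈ X, ∀ i : Fin k, cmap x (S i) ≤ Subgroup.normalizer (G : Set P) := by
    intro x hx i κ hκmem
    apply hnormSj κ
    intro j h
    have hKsubn : subn (r+1) (cmap x (S i)) X := by
      have := cmap_subn x (hSsubn i)
      rwa [cmap_self hx] at this
    rcases lemC (r+1) (cmap_issimp x (hSsimp i)) (cmap_nonab x (hSnonab i))
        (hSsimp j) (hSnonab j) hKsubn (hSsubn j) with heq | hcomm
    · -- the conjugate equals S j
      have hκSj : κ ∈ S j := heq ▸ hκmem
      constructor
      · intro hh
        exact (S j).mul_mem ((S j).mul_mem hκSj hh) ((S j).inv_mem hκSj)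
      · intro hh
        have : κ⁻¹ * (κ * h * κ⁻¹) * κ = h := by simp only [P]; group
        rw [← this]
        exact (S j).mul_mem ((S j).mul_mem ((S j).inv_mem hκSj) hh) hκSj
    · -- the conjugate centralizes S j
      have hc : ∀ a ∈ cmap x (S i), ∀ b ∈ S j, a * b = b * a := by
        intro a ha b hb
        have : ⁅a, b⁆ ∈ ⁅cmap x (S i), S j⁆ := Subgroup.commutator_mem_commutator ha hb
        rw [hcomm, Subgroup.mem_bot] at this
        exact commutatorElement_eq_one_iff_mul_comm.mp this
      constructor
      · intro hh
        have h1 : κ * h * κ⁻¹ = h := by rw [hc κ hκmem h hh]; group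
        rwa [h1]
      · intro hh
        have h1 := hc κ⁻¹ ((cmap x (S i)).inv_mem hκmem) (κ * h * κ⁻¹) hh
        have h2 : h = κ⁻¹ * (κ * h * κ⁻¹) * κ := by simp only [P]; group
        rw [h2, h1]
        have h3 : κ * h * κ⁻¹ * κ⁻¹ * κ = κ * h * κ⁻¹ := by simp only [P]; group
        rwa [h3]
  -- the middle subgroup
  refine Or.inr ⟨⨆ x : ↥X, cmap (x : P) G, ?_, ?_, ?_, ?_⟩
  · -- G ≤ N
    have h1 := le_iSup (fun x : ↥X => cmap (x : P) G) (1 : ↥X)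
    rw [OneMemClass.coe_one, cmap_one] at h1
    exact h1
  · -- N ≤ X
    apply iSup_le
    rintro x z hz
    rw [mem_cmap] at hz
    obtain ⟨g, hg, rfl⟩ := hz
    exact X.mul_mem (X.mul_mem x.2 (hGX hg)) (X.inv_mem x.2)
  · -- G normal in N
    have hNnorm : (⨆ x : ↥X, cmap (x : P) G) ≤ Subgroup.normalizer (G : Set P) := by
      apply iSup_le
      rintro x z hz
      rw [mem_cmap] at hz
      obtain ⟨g, hg, rfl⟩ := hz
      -- g ∈ G = ⨆ S i ; conjugate lands in normalizer
      have hg' : g ∈ ⨆ i, S i := hGle hg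
      refine Subgroup.iSup_induction S
        (C := fun z => (x : P) * z * (x : P)⁻¹ ∈ Subgroup.normalizer (G : Set P)) hg'
        (fun i s hs => hKj x x.2 i (mem_cmap.mpr ⟨s, hs, rfl⟩)) (by simp only [P]; simpa using one_mem _) ?_
      intro a b ha hb
      have hab : (x : P) * (a * b) * (x : P)⁻¹ =
          ((x : P) * a * (x : P)⁻¹) * ((x : P) * b * (x : P)⁻¹) := by simp only [P]; group
      rw [hab]
      exact mul_mem ha hb
    intro n hn g hg
    exact (Subgroup.mem_normalizer_iff.mp (hNnorm hn) g).mp hg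
  · -- N normal in X
    intro y hy n hn
    refine Subgroup.iSup_induction (fun x : ↥X => cmap (x : P) G)
      (C := fun z => y * z * y⁻¹ ∈ ⨆ x : ↥X, cmap (x : P) G) hn ?_ (by simpa using one_mem _) ?_
    · intro x z hz
      have : y * z * y⁻¹ ∈ cmap y (cmap (x : P) G) := mem_cmap.mpr ⟨z, hz, rfl⟩
      rw [cmap_cmap] at this
      have h2 : y * (x : P) = ((⟨y, hy⟩ * x : ↥X) : P) := rfl
      rw [h2] at this
      exact le_iSup (fun x : ↥X => cmap (x : P) G) (⟨y, hy⟩ * x) this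
    · intro a b ha hb
      have hab : y * (a * b) * y⁻¹ = (y * a * y⁻¹) * (y * b * y⁻¹) := by group
      rw [hab]
      exact mul_mem ha hb
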